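/- Under assumptions (A1)-(A3), the z-block of the augmented Lagrangian satisfies, at every iteration t: L({x_k^t}, z^{t+1}, {y_k^t}) − L({x_k^t}, z^t, {y_k^t}) ≤ − Σ_{k ∈ S^t} (ρ_k/2) ‖z_k^{t+1} − z_k^t‖², where S^t is the set of nodes that carry out the z-update at time t. -/

import Mathlib

open Filter Topology RealInnerProductSpace

noncomputable section

/-- Zero-padded restriction of a vector of nodal variables to a neighborhood:
coordinates outside the neighborhood are set to zero. -/
def restr {K : ℕ} (Nk : Finset (Fin K)) (v : Fin K → ℝ) : EuclideanSpace ℝ (Fin K) :=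
  WithLp.toLp 2 (fun j => if j ∈ Nk then v j else 0)

/-- The setting of the asynchronous proximal ADMM: network data, assumptions
(A1)-(A2), and the algorithmic update equations (i)-(iii) together with the
delay bounds and the update-frequency condition. -/
structure ProxADMM (K : ℕ) where
  /-- neighborhoods, `j ∈ Nb k` means `j ∈ N_k` -/
  Nb : Fin K → Finset (Fin K)
  self_mem : ∀ k, k ∈ Nb k
  symm : ∀ k j, j ∈ Nb k ↔ k ∈ Nb j
  /-- local cost of node `k`, as a function of the zero-padded neighborhood variables -/
  g : Fin K → EuclideanSpace ℝ (Fin K) → ℝ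
  g_local : ∀ k v w, (∀ j ∈ Nb k, v j = w j) → g k v = g k w
  /-- the Lipschitz constants of (A1) -/
  L : Fin K → ℝ
  L_pos : ∀ k, 0 < L k
  g_diff : ∀ k, Differentiable ℝ (g k)
  /-- (A1): the gradient of `g k` is `L k`-Lipschitz -/
  g_grad_lip : ∀ k v w, ‖gradient (g k) v - gradient (g k) w‖ ≤ L k * ‖v - w‖
  /-- the convex nonsmooth part -/
  h : Fin K → ℝ → ℝ
  h_convex : ∀ k, ConvexOn ℝ Set.univ (h k)
  /-- the constraint sets -/
  Xs : Fin K → Set ℝ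
  Xs_nonempty : ∀ k, (Xs k).Nonempty
  Xs_compact : ∀ k, IsCompact (Xs k)
  Xs_convex : ∀ k, Convex ℝ (Xs k)
  /-- (A2): `g k` is bounded below over the constraint set -/
  g_bddBelow : ∀ k, ∃ b, ∀ v : Fin K → ℝ, (∀ j, v j ∈ Xs j) → b ≤ g k (restr (Nb k) v)
  /-- penalty parameters -/
  ρ : Fin K → ℝ
  ρ_pos : ∀ k, 0 < ρ k
  /-- update frequencies `f_k` -/
  freq : Fin K → ℝ
  freq_pos : ∀ k, 0 < freq k
  freq_le_one : ∀ k, freq k ≤ 1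
  /-- maximum delays `T_k` -/
  Td : Fin K → ℕ
  /-- updating sets `S^t` -/
  Sset : ℕ → Finset (Fin K)
  /-- delayed index: `τ t k = [t+1]_k` -/
  τ : ℕ → Fin K → ℕ
  τ_le : ∀ t k, τ t k ≤ t + 1
  τ_ge : ∀ t k, t + 1 ≤ τ t k + Td k
  /-- iterates -/
  x : ℕ → Fin K → Fin K → ℝ
  z : ℕ → Fin K → ℝ
  y : ℕ → Fin K → Fin K → ℝ
  z_init_mem : ∀ j, z 0 j ∈ Xs j
  /-- (i): feasibility of the `z`-update -/
  z_update_mem : ∀ t j, j ∈ Sset t → z (t + 1) j ∈ Xs j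
  /-- (i): for `j ∈ S^t`, `z_j^{t+1}` minimizes the `j`-th block over `X_j` -/
  z_update_min : ∀ t j, j ∈ Sset t → IsMinOn
      (fun w => h j w + ∑ k ∈ Nb j, (y t k j * (x t k j - w) + ρ k / 2 * (x t k j - w) ^ 2))
      (Xs j) (z (t + 1) j)
  /-- (i): non-updating nodes keep their old value -/
  z_noupdate : ∀ t j, j ∉ Sset t → z (t + 1) j = z t j
  /-- (ii): proximal (linearized) `x`-update with delayed gradient -/
  x_update : ∀ t k, ∀ j ∈ Nb k,
      x (t + 1) k j = z (t + 1) j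
        - (1 / ρ k) * (gradient (g k) (restr (Nb k) (z (τ t k))) j + y t k j)
  /-- (iii): dual update -/
  y_update : ∀ t k, ∀ j ∈ Nb k,
      y (t + 1) k j = y t k j + ρ k * (x (t + 1) k j - z (t + 1) j)
  /-- in any window of `T` consecutive iterations node `k` updates at least `f_k T` times -/
  update_freq : ∀ k (t₀ T : ℕ),
      freq k * T ≤ ((Finset.Ico t₀ (t₀ + T)).filter (fun t => k ∈ Sset t)).card

/-- The augmented Lagrangian. -/
def ProxADMM.Lag {K : ℕ} (P : ProxADMM K) (xx : Fin K → Fin K → ℝ) (zz : Fin K → ℝ)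
    (yy : Fin K → Fin K → ℝ) : ℝ :=
  ∑ k, (P.g k (restr (P.Nb k) (xx k)) + P.h k (zz k)
    + ∑ j ∈ P.Nb k, (yy k j * (xx k j - zz j) + P.ρ k / 2 * (xx k j - zz j) ^ 2))

end

lemma strong_min_aux {h : ℝ → ℝ} (hconv : ConvexOn ℝ Set.univ h)
    {X : Set ℝ} (hX : Convex ℝ X) {σ B C : ℝ} (hσ : 0 ≤ σ)
    {zs zo : ℝ} (hzs : zs ∈ X) (hzo : zo ∈ X)
    (hmin : IsMinOn (fun w => h w + (σ / 2 * w ^ 2 + B * w + C)) X zs) :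
    (h zs + (σ / 2 * zs ^ 2 + B * zs + C)) - (h zo + (σ / 2 * zo ^ 2 + B * zo + C))
      ≤ -(σ / 2) * (zo - zs) ^ 2 := by
  have hstep : ∀ l : ℝ, 0 < l → l ≤ 1 →
      -(σ / 2) * l * (zo - zs) ^ 2 ≤ h zo - h zs + (σ * zs + B) * (zo - zs) := by
    intro l hl hl1
    have hmem : (1 - l) * zs + l * zo ∈ X := hX hzs hzo (by linarith) hl.le (by ring)
    have h1 := isMinOn_iff.mp hmin _ hmem
    have h2 : h ((1 - l) * zs + l * zo) ≤ (1 - l) * h zs + l * h zo := by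
      have := hconv.2 (Set.mem_univ zs) (Set.mem_univ zo)
        (by linarith : (0:ℝ) ≤ 1 - l) hl.le (by ring)
      simpa using this
    have key : 0 ≤ l * ((h zo - h zs + (σ * zs + B) * (zo - zs)) + σ / 2 * l * (zo - zs) ^ 2) := by
      nlinarith [h1, h2]
    have h3 : 0 ≤ (h zo - h zs + (σ * zs + B) * (zo - zs)) + σ / 2 * l * (zo - zs) ^ 2 := by
      nlinarith [key, hl]
    linarith
  have ha : 0 ≤ h zo - h zs + (σ * zs + B) * (zo - zs) := by
    by_contra hlt
    push_neg at hlt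
    rcases eq_or_lt_of_le (by positivity : (0:ℝ) ≤ σ / 2 * (zo - zs) ^ 2) with hc0 | hc0
    · have := hstep 1 one_pos le_rfl
      nlinarith
    · have hσd : 0 < σ * (zo - zs) ^ 2 := by nlinarith
      have hl0pos : 0 < min 1 (-(h zo - h zs + (σ * zs + B) * (zo - zs)) / (σ * (zo - zs) ^ 2)) :=
        lt_min one_pos (div_pos (by linarith) hσd)
      have hs := hstep _ hl0pos (min_le_left _ _)
      have hle := min_le_right 1 (-(h zo - h zs + (σ * zs + B) * (zo - zs)) / (σ * (zo - zs) ^ 2))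
      rw [le_div_iff₀ hσd] at hle
      nlinarith
  nlinarith

private lemma ProxADMM.z_mem {K : ℕ} (P : ProxADMM K) : ∀ t j, P.z t j ∈ P.Xs j := by
  intro t
  induction t with
  | zero => exact P.z_init_mem
  | succ n ih =>
    intro j
    by_cases hj : j ∈ P.Sset n
    · exact P.z_update_mem n j hj
    · rw [P.z_noupdate n j hj]; exact ih j

private lemma ProxADMM.sum_swap {K : ℕ} (P : ProxADMM K) (f : Fin K → Fin K → ℝ) :
    ∑ k, ∑ j ∈ P.Nb k, f k j = ∑ j, ∑ k ∈ P.Nb j, f k j := by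
  have h1 : ∀ k : Fin K, ∑ j ∈ P.Nb k, f k j = ∑ j : Fin K, if j ∈ P.Nb k then f k j else 0 := by
    intro k
    rw [Finset.sum_ite_mem, Finset.univ_inter]
  simp_rw [h1]
  rw [Finset.sum_comm]
  refine Finset.sum_congr rfl fun j _ => ?_
  calc ∑ k : Fin K, (if j ∈ P.Nb k then f k j else 0)
      = ∑ k : Fin K, (if k ∈ P.Nb j then f k j else 0) :=
        Finset.sum_congr rfl fun k _ => by rw [if_congr (P.symm k j) rfl rfl]
    _ = ∑ k ∈ P.Nb j, f k j := by rw [Finset.sum_ite_mem, Finset.univ_inter]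


/-- `z`-block bound for the augmented Lagrangian (asynchronous proximal ADMM,
assumptions (A1)-(A3)): the `z`-update decreases the Lagrangian by at least
`Σ_{k∈S^t} (ρ_k/2) ‖z_k^{t+1} - z_k^t‖²`. -/
theorem prox_admm_z_block_bound {K : ℕ} (P : ProxADMM K)
    (α β : Fin K → ℝ)
    (hα : ∀ k, α k = P.ρ k * P.freq k / 2
      - (7 * P.L k / (2 * P.ρ k ^ 2) + 1 / P.ρ k) * ((P.Nb k).card : ℝ) * P.L k ^ 2
          * ((P.Td k : ℝ) + 1) ^ 2
      - ((P.Nb k).card : ℝ) * P.L k * (P.Td k : ℝ) ^ 2 / 2)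
    (hβ : ∀ k, β k = P.ρ k - 7 * P.L k)
    (hA3 : ∀ k, 0 < α k ∧ 0 < β k)
    (t : ℕ) :
    P.Lag (P.x t) (P.z (t + 1)) (P.y t) - P.Lag (P.x t) (P.z t) (P.y t)
      ≤ - ∑ k ∈ P.Sset t, P.ρ k / 2 * ‖P.z (t + 1) k - P.z t k‖ ^ 2 := by
  have key : ∀ j : Fin K,
      (P.h j (P.z (t+1) j) - P.h j (P.z t j))
        + ∑ k ∈ P.Nb j,
            ((P.y t k j * (P.x t k j - P.z (t+1) j) + P.ρ k / 2 * (P.x t k j - P.z (t+1) j) ^ 2)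
              - (P.y t k j * (P.x t k j - P.z t j) + P.ρ k / 2 * (P.x t k j - P.z t j) ^ 2))
      ≤ if j ∈ P.Sset t then -(P.ρ j / 2 * ‖P.z (t+1) j - P.z t j‖ ^ 2) else 0 := by
    intro j
    by_cases hj : j ∈ P.Sset t
    · simp only [hj, if_true]
      have hobj : ∀ w : ℝ,
          (∑ k ∈ P.Nb j, (P.y t k j * (P.x t k j - w) + P.ρ k / 2 * (P.x t k j - w) ^ 2))
            = (∑ k ∈ P.Nb j, P.ρ k) / 2 * w ^ 2
              + (∑ k ∈ P.Nb j, (-(P.y t k j) - P.ρ k * P.x t k j)) * w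
              + (∑ k ∈ P.Nb j, (P.y t k j * P.x t k j + P.ρ k / 2 * (P.x t k j) ^ 2)) := by
        intro w
        rw [Finset.sum_div, Finset.sum_mul, Finset.sum_mul, ← Finset.sum_add_distrib,
          ← Finset.sum_add_distrib]
        exact Finset.sum_congr rfl fun k _ => by ring
      have hmin := P.z_update_min t j hj
      have heq : (fun w => P.h j w
            + ∑ k ∈ P.Nb j, (P.y t k j * (P.x t k j - w) + P.ρ k / 2 * (P.x t k j - w) ^ 2))
          = (fun w => P.h j w + ((∑ k ∈ P.Nb j, P.ρ k) / 2 * w ^ 2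
              + (∑ k ∈ P.Nb j, (-(P.y t k j) - P.ρ k * P.x t k j)) * w
              + (∑ k ∈ P.Nb j, (P.y t k j * P.x t k j + P.ρ k / 2 * (P.x t k j) ^ 2)))) :=
        funext fun w => by rw [hobj w]
      rw [heq] at hmin
      have hσ0 : 0 ≤ ∑ k ∈ P.Nb j, P.ρ k := Finset.sum_nonneg fun k _ => (P.ρ_pos k).le
      have hkey := strong_min_aux (P.h_convex j) (P.Xs_convex j) hσ0
        (P.z_update_mem t j hj) (P.z_mem t j) hmin
      have hρσ : P.ρ j ≤ ∑ k ∈ P.Nb j, P.ρ k :=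
        Finset.single_le_sum (fun k _ => (P.ρ_pos k).le) (P.self_mem j)
      rw [Finset.sum_sub_distrib, hobj, hobj]
      have hnorm : ‖P.z (t+1) j - P.z t j‖ ^ 2 = (P.z t j - P.z (t+1) j) ^ 2 := by
        rw [Real.norm_eq_abs, sq_abs]; ring
      rw [hnorm]
      nlinarith [hkey, sq_nonneg (P.z t j - P.z (t+1) j),
        mul_nonneg (by linarith : (0:ℝ) ≤ (∑ k ∈ P.Nb j, P.ρ k) - P.ρ j)
          (sq_nonneg (P.z t j - P.z (t+1) j))]
    · simp only [hj, if_false]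
      rw [P.z_noupdate t j hj]
      simp
  have expand : P.Lag (P.x t) (P.z (t+1)) (P.y t) - P.Lag (P.x t) (P.z t) (P.y t)
      = ∑ j, ((P.h j (P.z (t+1) j) - P.h j (P.z t j))
          + ∑ k ∈ P.Nb j,
              ((P.y t k j * (P.x t k j - P.z (t+1) j) + P.ρ k / 2 * (P.x t k j - P.z (t+1) j) ^ 2)
                - (P.y t k j * (P.x t k j - P.z t j) + P.ρ k / 2 * (P.x t k j - P.z t j) ^ 2))) := by
    calc P.Lag (P.x t) (P.z (t+1)) (P.y t) - P.Lag (P.x t) (P.z t) (P.y t)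
        = ∑ k, ((P.h k (P.z (t+1) k) - P.h k (P.z t k))
            + ∑ j ∈ P.Nb k,
                ((P.y t k j * (P.x t k j - P.z (t+1) j) + P.ρ k / 2 * (P.x t k j - P.z (t+1) j) ^ 2)
                  - (P.y t k j * (P.x t k j - P.z t j) + P.ρ k / 2 * (P.x t k j - P.z t j) ^ 2))) := by
          rw [ProxADMM.Lag, ProxADMM.Lag, ← Finset.sum_sub_distrib]
          exact Finset.sum_congr rfl fun k _ => by rw [Finset.sum_sub_distrib]; ring
      _ = (∑ k, (P.h k (P.z (t+1) k) - P.h k (P.z t k)))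
            + ∑ k, ∑ j ∈ P.Nb k,
                ((P.y t k j * (P.x t k j - P.z (t+1) j) + P.ρ k / 2 * (P.x t k j - P.z (t+1) j) ^ 2)
                  - (P.y t k j * (P.x t k j - P.z t j) + P.ρ k / 2 * (P.x t k j - P.z t j) ^ 2)) :=
          Finset.sum_add_distrib
      _ = (∑ j, (P.h j (P.z (t+1) j) - P.h j (P.z t j)))
            + ∑ j, ∑ k ∈ P.Nb j,
                ((P.y t k j * (P.x t k j - P.z (t+1) j) + P.ρ k / 2 * (P.x t k j - P.z (t+1) j) ^ 2)
                  - (P.y t k j * (P.x t k j - P.z t j) + P.ρ k / 2 * (P.x t k j - P.z t j) ^ 2)) := by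
          rw [P.sum_swap]
      _ = _ := Finset.sum_add_distrib.symm
  rw [expand]
  calc (∑ j, ((P.h j (P.z (t+1) j) - P.h j (P.z t j))
          + ∑ k ∈ P.Nb j,
              ((P.y t k j * (P.x t k j - P.z (t+1) j) + P.ρ k / 2 * (P.x t k j - P.z (t+1) j) ^ 2)
                - (P.y t k j * (P.x t k j - P.z t j) + P.ρ k / 2 * (P.x t k j - P.z t j) ^ 2))))
      ≤ ∑ j, (if j ∈ P.Sset t then -(P.ρ j / 2 * ‖P.z (t+1) j - P.z t j‖ ^ 2) else 0) :=
        Finset.sum_le_sum fun j _ => key j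
    _ = ∑ j ∈ P.Sset t, -(P.ρ j / 2 * ‖P.z (t+1) j - P.z t j‖ ^ 2) := by
        rw [Finset.sum_ite_mem, Finset.univ_inter]
    _ = - ∑ k ∈ P.Sset t, P.ρ k / 2 * ‖P.z (t+1) k - P.z t k‖ ^ 2 := by
        rw [Finset.sum_neg_distrib]
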